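/- Let 𝒥₁ be the integral operator on L¹(∂Ω, π) with kernel |x−y|^{1+2α−d}, where ∂Ω is a compact C¹ hypersurface in ℝ^d and α > 0. Then 𝒥₁ is a weakly compact operator on L¹(∂Ω, π). -/

import Mathlib

open MeasureTheory Bornology

lemma smallball_bound {E : Type*} [NormedAddCommGroup E] [MeasurableSpace E] [BorelSpace E]
    (π : Measure E) (C t γ : ℝ) (hC : 0 < C) (hγ : 0 < γ) (hβ : 0 < t + γ)
    (hA : ∀ (x : E) (r : ℝ), 0 < r → π (Metric.closedBall x r) ≤ ENNReal.ofReal (C * r ^ γ)) :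
    ∃ C' : ℝ, 0 < C' ∧ ∀ (x : E) (r : ℝ), 0 < r →
      ∫⁻ y in Metric.closedBall x r, ENNReal.ofReal (‖x - y‖ ^ t) ∂π
        ≤ ENNReal.ofReal (C' * r ^ (t + γ)) := by
  have h2 : (0:ℝ) < 1/2 := by norm_num
  set q : ℝ := (1/2 : ℝ) ^ (t + γ) with hq
  have hq0 : 0 < q := Real.rpow_pos_of_pos h2 _
  have hq1 : q < 1 := Real.rpow_lt_one (by norm_num) (by norm_num) hβ
  have h1q : (0:ℝ) < 1 - q := by linarith
  have hhalf : (0:ℝ) < (1/2:ℝ) ^ t := Real.rpow_pos_of_pos h2 _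
  refine ⟨C * ((1/2 : ℝ) ^ t + 1) * (1 - q)⁻¹, by positivity, ?_⟩
  intro x r hr
  -- singletons are null
  have hsing : ∀ z : E, π {z} = 0 := by
    intro z
    have htend : Filter.Tendsto (fun s : ℝ => ENNReal.ofReal (C * s ^ γ))
        (nhdsWithin 0 (Set.Ioi 0)) (nhds 0) := by
      have hcont : Filter.Tendsto (fun s : ℝ => C * s ^ γ) (nhds 0) (nhds (C * (0:ℝ) ^ γ)) :=
        ((Real.continuousAt_rpow_const 0 γ (Or.inr hγ.le)).const_smul C).tendsto
      have h0 : C * (0:ℝ) ^ γ = 0 := by rw [Real.zero_rpow hγ.ne', mul_zero]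
      rw [h0] at hcont
      have := (ENNReal.continuous_ofReal.tendsto 0).comp hcont
      simpa [Function.comp_def] using this.mono_left nhdsWithin_le_nhds
    have hle : ∀ s ∈ Set.Ioi (0:ℝ), π {z} ≤ ENNReal.ofReal (C * s ^ γ) := fun s hs =>
      le_trans (measure_mono (by simp [Metric.mem_closedBall, le_of_lt (Set.mem_Ioi.1 hs)])) (hA z s hs)
    have : π {z} ≤ 0 :=
      ge_of_tendsto htend (eventually_nhdsWithin_of_forall hle)
    exact le_antisymm this zero_le
  -- annuli
  set ρ : ℕ → ℝ := fun k => r / 2 ^ k with hρ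
  have hρpos : ∀ k, 0 < ρ k := fun k => by positivity
  set A : ℕ → Set E := fun k => Metric.closedBall x (ρ k) \ Metric.closedBall x (ρ (k+1)) with hA'
  have hAmeas : ∀ k, MeasurableSet (A k) :=
    fun k => Metric.isClosed_closedBall.measurableSet.diff Metric.isClosed_closedBall.measurableSet
  -- subset
  have hsub : Metric.closedBall x r \ {x} ⊆ ⋃ k, A k := by
    intro y hy
    obtain ⟨hyr, hyx⟩ := hy
    have hs0 : 0 < dist y x := dist_pos.2 (by simpa using hyx)
    have hexists : ∃ k : ℕ, ρ (k+1) < dist y x := by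
      obtain ⟨k, hk⟩ := pow_unbounded_of_one_lt (r / dist y x) (one_lt_two (α := ℝ))
      have h2k : (0:ℝ) < 2 ^ (k+1) := by positivity
      refine ⟨k, ?_⟩
      rw [div_lt_iff₀ hs0] at hk
      show r / 2 ^ (k+1) < dist y x
      rw [div_lt_iff₀ h2k]
      have h1 : (2:ℝ) ^ k ≤ 2 ^ (k+1) := by
        apply pow_le_pow_right₀ one_le_two; omega
      nlinarith
    set k₀ := Nat.find hexists with hk₀
    refine Set.mem_iUnion.2 ⟨k₀, ?_, ?_⟩
    · rcases Nat.eq_zero_or_pos k₀ with h0 | hpos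
      · rw [h0]
        simp only [Metric.mem_closedBall]
        simpa [hρ, Metric.mem_closedBall] using hyr
      · obtain ⟨m, hm⟩ := Nat.exists_eq_succ_of_ne_zero hpos.ne'
        have hmin := Nat.find_min hexists (m := m) (by omega)
        push_neg at hmin
        rw [Metric.mem_closedBall]
        calc dist y x ≤ ρ (m+1) := hmin
          _ = ρ k₀ := by rw [hm]
    · intro hmem
      exact absurd (Metric.mem_closedBall.1 hmem) (not_le.2 (Nat.find_spec hexists))
  -- lintegral over closed ball equals over ball minus center
  have hball_ae : ∫⁻ y in Metric.closedBall x r, ENNReal.ofReal (‖x - y‖ ^ t) ∂π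
      = ∫⁻ y in Metric.closedBall x r \ {x}, ENNReal.ofReal (‖x - y‖ ^ t) ∂π := by
    refine (setLIntegral_congr ?_).symm
    exact MeasureTheory.diff_ae_eq_self.2 (measure_mono_null Set.inter_subset_right (hsing x))
  set c : ℝ := (1/2 : ℝ) with hc
  have hc0 : (0:ℝ) ≤ c := by norm_num
  have hρeq : ∀ k, ρ k = r * c ^ k := by
    intro k; rw [hρ]; simp only [hc]; rw [div_pow, one_pow]; ring
  have hpow : ∀ (u : ℝ) (k : ℕ), (ρ k) ^ u = r ^ u * (c ^ u) ^ k := by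
    intro u k
    rw [hρeq, Real.mul_rpow hr.le (by positivity), ← Real.rpow_natCast c k,
      ← Real.rpow_mul hc0, mul_comm (k:ℝ) u, Real.rpow_mul hc0, Real.rpow_natCast]
  set a : ℝ := C * (c ^ t + 1) * r ^ (t + γ) with ha'
  have ha : 0 < a := by positivity
  have hstep : ∀ k, ∫⁻ y in A k, ENNReal.ofReal (‖x - y‖ ^ t) ∂π
      ≤ ENNReal.ofReal (a * q ^ k) := by
    intro k
    have hcalc : (ρ (k+1) ^ t + ρ k ^ t) * (C * ρ k ^ γ) = a * q ^ k := by
      rw [hpow t (k+1), hpow t k, hpow γ k, ha', hq,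
        show c ^ (t+γ) = c ^ t * c ^ γ from Real.rpow_add (by norm_num) t γ,
        mul_pow, Real.rpow_add hr, pow_succ]
      ring
    have h1 : ∫⁻ y in A k, ENNReal.ofReal (‖x - y‖ ^ t) ∂π
        ≤ ∫⁻ _ in A k, ENNReal.ofReal (ρ (k+1) ^ t + ρ k ^ t) ∂π := by
      refine setLIntegral_mono measurable_const ?_
      intro y hy
      rw [hA'] at hy
      obtain ⟨hy1, hy2⟩ := hy
      rw [Metric.mem_closedBall] at hy1
      have hy2' : ρ (k+1) < dist y x := not_le.1 (fun h => hy2 (Metric.mem_closedBall.2 h))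
      have hd : ‖x - y‖ = dist y x := by rw [dist_eq_norm, norm_sub_rev]
      apply ENNReal.ofReal_le_ofReal
      rw [hd]
      rcases le_or_gt 0 t with ht | ht
      · have h1 : dist y x ^ t ≤ ρ k ^ t := Real.rpow_le_rpow dist_nonneg hy1 ht
        have h2 : 0 ≤ ρ (k+1) ^ t := Real.rpow_nonneg (hρpos _).le _
        linarith
      · have h1 : dist y x ^ t ≤ ρ (k+1) ^ t :=
          Real.rpow_le_rpow_of_nonpos (hρpos _) hy2'.le ht.le
        have h2 : 0 ≤ ρ k ^ t := Real.rpow_nonneg (hρpos _).le _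
        linarith
    have h2 : ∫⁻ _ in A k, ENNReal.ofReal (ρ (k+1) ^ t + ρ k ^ t) ∂π
        = ENNReal.ofReal (ρ (k+1) ^ t + ρ k ^ t) * π (A k) := setLIntegral_const _ _
    have h3 : π (A k) ≤ ENNReal.ofReal (C * ρ k ^ γ) := by
      rw [hA']
      exact le_trans (measure_mono Set.diff_subset) (hA x (ρ k) (hρpos k))
    calc ∫⁻ y in A k, ENNReal.ofReal (‖x - y‖ ^ t) ∂π
        ≤ ENNReal.ofReal (ρ (k+1) ^ t + ρ k ^ t) * π (A k) := h1.trans_eq h2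
      _ ≤ ENNReal.ofReal (ρ (k+1) ^ t + ρ k ^ t) * ENNReal.ofReal (C * ρ k ^ γ) := by gcongr
      _ = ENNReal.ofReal ((ρ (k+1) ^ t + ρ k ^ t) * (C * ρ k ^ γ)) := by
          have hs1 := Real.rpow_nonneg (hρpos (k+1)).le t
          have hs2 := Real.rpow_nonneg (hρpos k).le t
          rw [← ENNReal.ofReal_mul (by linarith)]
      _ = ENNReal.ofReal (a * q ^ k) := by rw [hcalc]
  calc ∫⁻ y in Metric.closedBall x r, ENNReal.ofReal (‖x - y‖ ^ t) ∂π
      = ∫⁻ y in Metric.closedBall x r \ {x}, ENNReal.ofReal (‖x - y‖ ^ t) ∂π := hball_ae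
    _ ≤ ∫⁻ y in ⋃ k, A k, ENNReal.ofReal (‖x - y‖ ^ t) ∂π := lintegral_mono_set hsub
    _ ≤ ∑' k, ∫⁻ y in A k, ENNReal.ofReal (‖x - y‖ ^ t) ∂π := lintegral_iUnion_le _ _
    _ ≤ ∑' k, ENNReal.ofReal (a * q ^ k) := ENNReal.tsum_le_tsum hstep
    _ = ENNReal.ofReal a * ∑' k, (ENNReal.ofReal q) ^ k := by
        simp_rw [ENNReal.ofReal_mul ha.le, ENNReal.ofReal_pow hq0.le]
        rw [ENNReal.tsum_mul_left]
    _ = ENNReal.ofReal a * (1 - ENNReal.ofReal q)⁻¹ := by rw [ENNReal.tsum_geometric]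
    _ = ENNReal.ofReal a * ENNReal.ofReal ((1 - q)⁻¹) := by
        rw [← ENNReal.ofReal_one, ← ENNReal.ofReal_sub _ hq0.le,
          ENNReal.ofReal_inv_of_pos h1q]
    _ = ENNReal.ofReal (C * (c ^ t + 1) * (1 - q)⁻¹ * r ^ (t + γ)) := by
        rw [← ENNReal.ofReal_mul ha.le, ha']; ring_nf


lemma measurable_rpow_const_of_nonneg {α : Type*} [MeasurableSpace α] {g : α → ℝ}
    (hg : Measurable g) (hg0 : ∀ a, 0 ≤ g a) (t : ℝ) : Measurable fun a => g a ^ t := by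
  rcases eq_or_ne t 0 with rfl | ht
  · simpa [Real.rpow_zero] using measurable_const
  · have heq : (fun a => g a ^ t)
        = fun a => if g a = 0 then 0 else Real.exp (Real.log (g a) * t) := by
      funext a
      rcases eq_or_lt_of_le (hg0 a) with h | h
      · simp [← h, Real.zero_rpow ht]
      · rw [if_neg h.ne', Real.rpow_def_of_pos h]
    rw [heq]
    exact Measurable.ite (hg (measurableSet_singleton 0)) measurable_const
      (Real.measurable_exp.comp ((Real.measurable_log.comp hg).mul_const t))

lemma uc_bound {E : Type*} [NormedAddCommGroup E] [MeasurableSpace E] [BorelSpace E]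
    (π : Measure E) [IsFiniteMeasure π] (C' t β ρ : ℝ) (hC' : 0 < C') (hβ : 0 < β) (hρ : 0 ≤ ρ)
    (F : Set E) (hFρ : F ⊆ Metric.closedBall 0 ρ)
    (hFae : ∀ᵐ x ∂π, x ∈ F)
    (hsb : ∀ (x : E) (r : ℝ), 0 < r →
      ∫⁻ y in Metric.closedBall x r, ENNReal.ofReal (‖x - y‖ ^ t) ∂π
        ≤ ENNReal.ofReal (C' * r ^ β))
    (ε : ℝ) (hε : 0 < ε) :
    ∃ δ : ℝ, 0 < δ ∧ ∀ y ∈ F, ∀ y' ∈ F, dist y y' ≤ δ →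
      ∫⁻ x, ENNReal.ofReal |‖x - y‖ ^ t - ‖x - y'‖ ^ t| ∂π ≤ ENNReal.ofReal ε := by
  have h3β : (0:ℝ) < (3:ℝ) ^ β := Real.rpow_pos_of_pos (by norm_num) _
  set a : ℝ := ε / (4 * C' * 3 ^ β) with ha'
  have ha : 0 < a := by positivity
  set r : ℝ := min 1 (a ^ β⁻¹) with hr'
  have hr0 : 0 < r := lt_min one_pos (Real.rpow_pos_of_pos ha _)
  have hr3 : C' * (3 * r) ^ β ≤ ε / 4 := by
    have h1 : r ^ β ≤ a := by
      calc r ^ β ≤ (a ^ β⁻¹) ^ β :=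
            Real.rpow_le_rpow hr0.le (min_le_right _ _) hβ.le
        _ = a := by
            rw [← Real.rpow_mul ha.le, inv_mul_cancel₀ hβ.ne', Real.rpow_one]
    calc C' * (3 * r) ^ β = C' * (3 ^ β * r ^ β) := by
          rw [Real.mul_rpow (by norm_num) hr0.le]
      _ ≤ C' * (3 ^ β * a) := by gcongr
      _ = ε / 4 := by rw [ha']; field_simp
  set L : ℝ := |t| * max (r ^ (t-1)) ((2*ρ+1) ^ (t-1)) with hL'
  have hL0 : 0 ≤ L := by positivity
  set μr : ℝ := (π Set.univ).toReal with hμr'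
  have hμr : 0 ≤ μr := ENNReal.toReal_nonneg
  refine ⟨min r (ε / (2 * (L+1) * (μr+1))), lt_min hr0 (by positivity), ?_⟩
  set δ : ℝ := min r (ε / (2 * (L+1) * (μr+1))) with hδ'
  have hδr : δ ≤ r := min_le_left _ _
  have hδε : δ ≤ ε / (2 * (L+1) * (μr+1)) := min_le_right _ _
  have hδ0 : 0 < δ := lt_min hr0 (by positivity)
  intro y hy y' hy' hyy'
  set S : Set E := Metric.closedBall y (2*r) with hS'
  have hSm : MeasurableSet S := Metric.isClosed_closedBall.measurableSet
  have hmeas1 : Measurable fun x : E => ENNReal.ofReal (‖x - y‖ ^ t) :=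
    ENNReal.measurable_ofReal.comp (measurable_rpow_const_of_nonneg
      ((continuous_id.sub continuous_const).norm.measurable) (fun _ => norm_nonneg _) t)
  -- part 1 : on S
  have hpart1 : ∫⁻ x in S, ENNReal.ofReal |‖x - y‖ ^ t - ‖x - y'‖ ^ t| ∂π
      ≤ ENNReal.ofReal (ε/2) := by
    have hpt : ∀ x : E, ENNReal.ofReal |‖x - y‖ ^ t - ‖x - y'‖ ^ t|
        ≤ ENNReal.ofReal (‖x - y‖ ^ t) + ENNReal.ofReal (‖x - y'‖ ^ t) := by
      intro x
      have h1 : 0 ≤ ‖x - y‖ ^ t := Real.rpow_nonneg (norm_nonneg _) _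
      have h2 : 0 ≤ ‖x - y'‖ ^ t := Real.rpow_nonneg (norm_nonneg _) _
      rw [← ENNReal.ofReal_add h1 h2]
      exact ENNReal.ofReal_le_ofReal (abs_le.2 ⟨by linarith, by linarith⟩)
    have hsplit : ∫⁻ x in S, ENNReal.ofReal |‖x - y‖ ^ t - ‖x - y'‖ ^ t| ∂π
        ≤ ∫⁻ x in S, ENNReal.ofReal (‖x - y‖ ^ t) ∂π
          + ∫⁻ x in S, ENNReal.ofReal (‖x - y'‖ ^ t) ∂π := by
      rw [← lintegral_add_left hmeas1]
      exact lintegral_mono fun x => hpt x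
    have hterm1 : ∫⁻ x in S, ENNReal.ofReal (‖x - y‖ ^ t) ∂π ≤ ENNReal.ofReal (ε/4) := by
      have : ∫⁻ x in S, ENNReal.ofReal (‖x - y‖ ^ t) ∂π
          = ∫⁻ x in Metric.closedBall y (2*r), ENNReal.ofReal (‖y - x‖ ^ t) ∂π := by
        rw [hS']
        exact lintegral_congr fun x => by rw [norm_sub_rev]
      rw [this]
      refine le_trans (hsb y (2*r) (by positivity)) (ENNReal.ofReal_le_ofReal ?_)
      calc C' * (2*r) ^ β ≤ C' * (3*r) ^ β :=
            mul_le_mul_of_nonneg_left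
              (Real.rpow_le_rpow (by positivity) (by linarith) hβ.le) hC'.le
        _ ≤ ε / 4 := hr3
    have hterm2 : ∫⁻ x in S, ENNReal.ofReal (‖x - y'‖ ^ t) ∂π ≤ ENNReal.ofReal (ε/4) := by
      have hsub : S ⊆ Metric.closedBall y' (3*r) := by
        intro z hz
        rw [hS', Metric.mem_closedBall] at hz
        rw [Metric.mem_closedBall]
        calc dist z y' ≤ dist z y + dist y y' := dist_triangle _ _ _
          _ ≤ 2*r + δ := add_le_add hz hyy'
          _ ≤ 3*r := by linarith
      have heq : ∫⁻ x in Metric.closedBall y' (3*r), ENNReal.ofReal (‖x - y'‖ ^ t) ∂π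
          = ∫⁻ x in Metric.closedBall y' (3*r), ENNReal.ofReal (‖y' - x‖ ^ t) ∂π :=
        lintegral_congr fun x => by rw [norm_sub_rev]
      refine le_trans (lintegral_mono_set hsub) ?_
      rw [heq]
      exact le_trans (hsb y' (3*r) (by positivity)) (ENNReal.ofReal_le_ofReal hr3)
    calc ∫⁻ x in S, ENNReal.ofReal |‖x - y‖ ^ t - ‖x - y'‖ ^ t| ∂π
        ≤ _ + _ := hsplit
      _ ≤ ENNReal.ofReal (ε/4) + ENNReal.ofReal (ε/4) := add_le_add hterm1 hterm2
      _ = ENNReal.ofReal (ε/2) := by rw [← ENNReal.ofReal_add (by linarith) (by linarith)]; ring_nf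
  -- part 2 : off S
  have hpart2 : ∫⁻ x in Sᶜ, ENNReal.ofReal |‖x - y‖ ^ t - ‖x - y'‖ ^ t| ∂π
      ≤ ENNReal.ofReal (ε/2) := by
    have hbd : ∀ᵐ x ∂(π.restrict Sᶜ),
        ENNReal.ofReal |‖x - y‖ ^ t - ‖x - y'‖ ^ t| ≤ ENNReal.ofReal (L * δ) := by
      filter_upwards [ae_restrict_of_ae hFae, ae_restrict_mem hSm.compl] with x hxF hxS
      have hd1 : 2*r < dist x y := by
        by_contra h
        exact hxS (Metric.mem_closedBall.2 (not_lt.1 h))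
      have hd1' : dist x y ≤ 2*ρ+1 := by
        have h1 : ‖x‖ ≤ ρ := mem_closedBall_zero_iff.1 (hFρ hxF)
        have h2 : ‖y‖ ≤ ρ := mem_closedBall_zero_iff.1 (hFρ hy)
        calc dist x y = ‖x - y‖ := dist_eq_norm _ _
          _ ≤ ‖x‖ + ‖y‖ := norm_sub_le _ _
          _ ≤ 2*ρ+1 := by linarith
      have hd2' : dist x y' ≤ 2*ρ+1 := by
        have h1 : ‖x‖ ≤ ρ := mem_closedBall_zero_iff.1 (hFρ hxF)
        have h2 : ‖y'‖ ≤ ρ := mem_closedBall_zero_iff.1 (hFρ hy')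
        calc dist x y' = ‖x - y'‖ := dist_eq_norm _ _
          _ ≤ ‖x‖ + ‖y'‖ := norm_sub_le _ _
          _ ≤ 2*ρ+1 := by linarith
      have habs : |dist x y - dist x y'| ≤ dist y y' := by
        have := abs_dist_sub_le y y' x
        rwa [dist_comm y x, dist_comm y' x] at this
      have hd2 : r ≤ dist x y' := by
        have h1 : dist x y - dist x y' ≤ dist y y' := (abs_le.1 habs).2
        have h2 : dist y y' ≤ r := hyy'.trans hδr
        nlinarith
      have hmem1 : dist x y ∈ Set.Icc r (2*ρ+1) := ⟨by linarith, hd1'⟩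
      have hmem2 : dist x y' ∈ Set.Icc r (2*ρ+1) := ⟨hd2, hd2'⟩
      have hderiv : ∀ z ∈ Set.Icc r (2*ρ+1),
          HasDerivWithinAt (fun z : ℝ => z ^ t) (t * z^(t-1)) (Set.Icc r (2*ρ+1)) z :=
        fun z hz => (Real.hasDerivAt_rpow_const
          (Or.inl (by rcases hz with ⟨h1, _⟩; nlinarith))).hasDerivWithinAt
      have hLb : ∀ z ∈ Set.Icc r (2*ρ+1), ‖t * z^(t-1)‖ ≤ L := by
        intro z hz
        obtain ⟨hz1, hz2⟩ := hz
        have hz0 : 0 < z := lt_of_lt_of_le hr0 hz1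
        rw [Real.norm_eq_abs, abs_mul, abs_of_nonneg (Real.rpow_nonneg hz0.le _)]
        rw [hL']
        have hle : z ^ (t-1) ≤ max (r ^ (t-1)) ((2*ρ+1) ^ (t-1)) := by
          rcases le_or_gt 0 (t-1) with h | h
          · exact le_trans (Real.rpow_le_rpow hz0.le hz2 h) (le_max_right _ _)
          · exact le_trans (Real.rpow_le_rpow_of_nonpos hr0 hz1 h.le) (le_max_left _ _)
        exact mul_le_mul_of_nonneg_left hle (abs_nonneg t)
      have hmvt := (convex_Icc r (2*ρ+1)).norm_image_sub_le_of_norm_hasDerivWithin_le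
        hderiv hLb hmem2 hmem1
      -- hmvt : ‖(dist x y) ^ t - (dist x y') ^ t‖ ≤ L * ‖dist x y - dist x y'‖
      apply ENNReal.ofReal_le_ofReal
      have hxy : ‖x - y‖ = dist x y := (dist_eq_norm _ _).symm
      have hxy' : ‖x - y'‖ = dist x y' := (dist_eq_norm _ _).symm
      rw [hxy, hxy']
      calc |dist x y ^ t - dist x y' ^ t| ≤ L * ‖dist x y - dist x y'‖ := hmvt
        _ = L * |dist x y - dist x y'| := by rw [Real.norm_eq_abs]
        _ ≤ L * dist y y' := mul_le_mul_of_nonneg_left habs hL0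
        _ ≤ L * δ := mul_le_mul_of_nonneg_left hyy' hL0
    calc ∫⁻ x in Sᶜ, ENNReal.ofReal |‖x - y‖ ^ t - ‖x - y'‖ ^ t| ∂π
        ≤ ∫⁻ _ in Sᶜ, ENNReal.ofReal (L * δ) ∂π := lintegral_mono_ae hbd
      _ = ENNReal.ofReal (L * δ) * π Sᶜ := setLIntegral_const _ _
      _ ≤ ENNReal.ofReal (L * δ) * π Set.univ := by gcongr; exact Set.subset_univ _
      _ = ENNReal.ofReal (L * δ) * ENNReal.ofReal μr := by
          rw [hμr', ENNReal.ofReal_toReal (measure_ne_top π _)]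
      _ = ENNReal.ofReal (L * δ * μr) := by
          rw [← ENNReal.ofReal_mul (by positivity)]
      _ ≤ ENNReal.ofReal (ε/2) := by
          apply ENNReal.ofReal_le_ofReal
          have key : L * δ * μr ≤ (L+1) * (ε / (2 * (L+1) * (μr+1))) * (μr+1) := by
            have h1 : L * δ * μr ≤ (L+1) * δ * (μr+1) := by nlinarith
            have h2 : (L+1) * δ * (μr+1) ≤ (L+1) * (ε / (2 * (L+1) * (μr+1))) * (μr+1) :=
              mul_le_mul_of_nonneg_right
                (mul_le_mul_of_nonneg_left hδε (by linarith)) (by linarith)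
            linarith
          calc L * δ * μr ≤ (L+1) * (ε / (2 * (L+1) * (μr+1))) * (μr+1) := key
            _ = ε/2 := by field_simp
  calc ∫⁻ x, ENNReal.ofReal |‖x - y‖ ^ t - ‖x - y'‖ ^ t| ∂π
      = ∫⁻ x in S, ENNReal.ofReal |‖x - y‖ ^ t - ‖x - y'‖ ^ t| ∂π
        + ∫⁻ x in Sᶜ, ENNReal.ofReal |‖x - y‖ ^ t - ‖x - y'‖ ^ t| ∂π :=
        (lintegral_add_compl _ hSm).symm
    _ ≤ ENNReal.ofReal (ε/2) + ENNReal.ofReal (ε/2) := add_le_add hpart1 hpart2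
    _ = ENNReal.ofReal ε := by rw [← ENNReal.ofReal_add (by linarith) (by linarith)]; ring_nf


lemma Lp_coeFn_finsetSum {α : Type*} [MeasurableSpace α] (μ : Measure α) {ι : Type*}
    (s : Finset ι) (f : ι → Lp ℝ 1 μ) :
    ⇑(∑ i ∈ s, f i) =ᵐ[μ] fun x => ∑ i ∈ s, f i x := by
  classical
  induction s using Finset.induction_on with
  | empty => simp only [Finset.sum_empty]; exact Lp.coeFn_zero ℝ 1 μ
  | insert _ _ hnotmem ih =>
    rename_i a s
    rw [Finset.sum_insert hnotmem]
    filter_upwards [Lp.coeFn_add (f a) (∑ i ∈ s, f i), ih] with x h1 h2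
    rw [h1, Pi.add_apply, h2]
    simp [Finset.sum_insert hnotmem]


/-- An operator between normed spaces is weakly compact if it maps the closed unit ball
into a weakly compact set. -/
def IsWeaklyCompactOperator {X Y : Type*} [NormedAddCommGroup X] [NormedSpace ℝ X]
    [NormedAddCommGroup Y] [NormedSpace ℝ Y] (f : X → Y) : Prop :=
  ∃ K : Set (WeakSpace ℝ Y), IsCompact K ∧ f '' Metric.closedBall 0 1 ⊆ K

/-- The integral operator `𝒥₁` with kernel `|x-y|^{1+2α-d}` (`α > 0`) on
`L¹(∂Ω, π)`, where `π` is the surface measure of a compact `C¹` hypersurface `∂Ω ⊆ ℝᵈ`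
(encoded through its upper Ahlfors `(d-1)`-regularity), is a well-defined bounded operator
and is weakly compact. -/
theorem kernel_operator_weakly_compact {d : ℕ} (hd : 2 ≤ d)
    (α : ℝ) (hα : 0 < α) (hα1 : α < 1)
    (Ω : Set (EuclideanSpace ℝ (Fin d))) (hΩo : IsOpen Ω) (hΩb : IsBounded Ω)
    (π : Measure (EuclideanSpace ℝ (Fin d))) [IsFiniteMeasure π]
    (hsupp : π {x | x ∉ frontier Ω} = 0)
    (C : ℝ) (hC : 0 < C)
    (hAhlfors : ∀ (x : EuclideanSpace ℝ (Fin d)) (r : ℝ), 0 < r →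
      π (Metric.closedBall x r) ≤ ENNReal.ofReal (C * r ^ ((d : ℝ) - 1))) :
    ∃ T : Lp ℝ 1 π →L[ℝ] Lp ℝ 1 π,
      (∀ ψ : Lp ℝ 1 π, ∀ᵐ x ∂π,
        T ψ x = ∫ y, ‖x - y‖ ^ (1 + 2 * α - (d : ℝ)) * ψ y ∂π) ∧
      IsWeaklyCompactOperator ⇑T := by
  classical
  set t : ℝ := 1 + 2 * α - (d : ℝ) with ht'
  have hγ : (0:ℝ) < (d : ℝ) - 1 := by
    have : (2:ℝ) ≤ (d:ℝ) := by exact_mod_cast hd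
    linarith
  have hβeq : t + ((d:ℝ) - 1) = 2 * α := by rw [ht']; ring
  have hβpos : 0 < t + ((d:ℝ) - 1) := by rw [hβeq]; linarith
  obtain ⟨C', hC'0, hsb⟩ := smallball_bound π C t ((d:ℝ)-1) hC hγ hβpos hAhlfors
  set β : ℝ := t + ((d:ℝ)-1) with hβ'
  -- the support set
  set F : Set (EuclideanSpace ℝ (Fin d)) := frontier Ω with hF'
  have hFm : MeasurableSet F := isClosed_frontier.measurableSet
  have hFb : IsBounded F := by
    rw [hF']
    exact (hΩb.closure).subset frontier_subset_closure
  obtain ⟨ρ₀, hρ₀⟩ := hFb.subset_closedBall 0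
  set ρ : ℝ := max ρ₀ 0 with hρ'
  have hρ0 : 0 ≤ ρ := le_max_right _ _
  have hFρ : F ⊆ Metric.closedBall 0 ρ :=
    hρ₀.trans (Metric.closedBall_subset_closedBall (le_max_left _ _))
  have hFae : ∀ᵐ x ∂π, x ∈ F := by
    rw [MeasureTheory.ae_iff]
    rw [hF']
    exact hsupp
  have hπF : π.restrict F = π := Measure.restrict_eq_self_of_ae_mem hFae
  have hFcompact : IsCompact F := by
    rw [hF'] at hFb ⊢
    exact Metric.isCompact_of_isClosed_isBounded isClosed_frontier hFb
  -- the kernel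
  set K : EuclideanSpace ℝ (Fin d) → EuclideanSpace ℝ (Fin d) → ℝ := fun x y => ‖x - y‖ ^ t with hK'
  have hknn : ∀ x y, 0 ≤ K x y := fun x y => Real.rpow_nonneg (norm_nonneg _) _
  have hksymm : ∀ x y, K x y = K y x := fun x y => by rw [hK']; simp only
                                                      rw [norm_sub_rev]
  have hkm : Measurable (fun p : EuclideanSpace ℝ (Fin d) × EuclideanSpace ℝ (Fin d) => K p.1 p.2) :=
    measurable_rpow_const_of_nonneg ((continuous_fst.sub continuous_snd).norm.measurable)
      (fun _ => norm_nonneg _) t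
  have hkm1 : ∀ y : EuclideanSpace ℝ (Fin d), Measurable (fun x => K x y) := fun y =>
    measurable_rpow_const_of_nonneg ((continuous_id.sub continuous_const).norm.measurable)
      (fun _ => norm_nonneg _) t
  -- global bound
  set Mr : ℝ := C' * (2*ρ+1) ^ β with hMr'
  have hMr0 : 0 < Mr := mul_pos hC'0 (Real.rpow_pos_of_pos (by linarith) _)
  set M : ENNReal := ENNReal.ofReal Mr with hM'
  have hMtop : M ≠ ⊤ := ENNReal.ofReal_ne_top
  have hMz : ∀ z ∈ Metric.closedBall (0:EuclideanSpace ℝ (Fin d)) ρ, ∫⁻ w, ENNReal.ofReal (K z w) ∂π ≤ M := by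
    intro z hz
    have h1 : ∫⁻ w, ENNReal.ofReal (K z w) ∂π = ∫⁻ w in F, ENNReal.ofReal (K z w) ∂π := by
      conv_lhs => rw [← hπF]
    have h2 : F ⊆ Metric.closedBall z (2*ρ+1) := by
      intro w hw
      rw [Metric.mem_closedBall]
      have h3 : ‖w‖ ≤ ρ := mem_closedBall_zero_iff.1 (hFρ hw)
      have h4 : ‖z‖ ≤ ρ := mem_closedBall_zero_iff.1 hz
      calc dist w z ≤ ‖w‖ + ‖z‖ := by rw [dist_eq_norm]; exact norm_sub_le _ _
        _ ≤ 2*ρ+1 := by linarith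
    rw [h1]
    exact le_trans (lintegral_mono_set h2) (hsb z (2*ρ+1) (by linarith))
  have hMae : ∀ᵐ y ∂π, ∫⁻ x, ENNReal.ofReal (K x y) ∂π ≤ M := by
    filter_upwards [hFae] with y hy
    have heq : (fun x => ENNReal.ofReal (K x y)) = fun x => ENNReal.ofReal (K y x) :=
      funext fun x => by rw [hksymm]
    rw [heq]
    exact hMz y (hFρ hy)
  have hMae' : ∀ᵐ y ∂π, ∫⁻ x, (‖K x y‖₊ : ENNReal) ∂π ≤ M := by
    filter_upwards [hMae] with y hy
    have heq : (fun x => (‖K x y‖₊ : ENNReal)) = fun x => ENNReal.ofReal (K x y) :=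
      funext fun x => Real.enorm_eq_ofReal (hknn x y)
    rwa [heq]
  -- L¹ facts
  have hψnorm : ∀ ψ : Lp ℝ 1 π, ∫⁻ y, (‖ψ y‖₊ : ENNReal) ∂π = ENNReal.ofReal ‖ψ‖ := by
    intro ψ
    have hfin : ∫⁻ y, (‖ψ y‖₊ : ENNReal) ∂π < ⊤ := by
      have := Lp.eLpNorm_lt_top ψ
      rwa [eLpNorm_one_eq_lintegral_enorm] at this
    rw [Lp.norm_def, eLpNorm_one_eq_lintegral_enorm]; exact (ENNReal.ofReal_toReal hfin.ne).symm
  -- Tonelli bound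
  have hTon : ∀ ψ : Lp ℝ 1 π,
      ∫⁻ y, ∫⁻ x, (‖K x y * ψ y‖₊ : ENNReal) ∂π ∂π ≤ M * ENNReal.ofReal ‖ψ‖ := by
    intro ψ
    calc ∫⁻ y, ∫⁻ x, (‖K x y * ψ y‖₊ : ENNReal) ∂π ∂π
        = ∫⁻ y, (∫⁻ x, (‖K x y‖₊ : ENNReal) ∂π) * (‖ψ y‖₊ : ENNReal) ∂π := by
          refine lintegral_congr fun y => ?_
          simp_rw [nnnorm_mul, ENNReal.coe_mul]
          exact lintegral_mul_const' _ _ ENNReal.coe_ne_top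
      _ ≤ ∫⁻ y, M * (‖ψ y‖₊ : ENNReal) ∂π := by
          refine lintegral_mono_ae ?_
          filter_upwards [hMae'] with y hy
          exact mul_le_mul_left hy _
      _ = M * ∫⁻ y, (‖ψ y‖₊ : ENNReal) ∂π := lintegral_const_mul' M _ hMtop
      _ = M * ENNReal.ofReal ‖ψ‖ := by rw [hψnorm]
  -- product integrability
  have hprodm : ∀ ψ : Lp ℝ 1 π,
      AEStronglyMeasurable (fun p : EuclideanSpace ℝ (Fin d) × EuclideanSpace ℝ (Fin d) => K p.1 p.2 * ψ p.2) (π.prod π) :=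
    fun ψ => hkm.aestronglyMeasurable.mul (Lp.aestronglyMeasurable ψ).comp_snd
  have hprod : ∀ ψ : Lp ℝ 1 π,
      Integrable (fun p : EuclideanSpace ℝ (Fin d) × EuclideanSpace ℝ (Fin d) => K p.1 p.2 * ψ p.2) (π.prod π) := by
    intro ψ
    refine ⟨hprodm ψ, ?_⟩
    rw [hasFiniteIntegral_def]
    rw [lintegral_prod_symm _ (hprodm ψ).enorm]
    exact lt_of_le_of_lt (hTon ψ) (ENNReal.mul_lt_top hMtop.lt_top ENNReal.ofReal_lt_top)
  -- the operator, pointwise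
  set g : Lp ℝ 1 π → EuclideanSpace ℝ (Fin d) → ℝ := fun ψ x => ∫ y, K x y * ψ y ∂π with hg'
  have hgint : ∀ ψ, Integrable (g ψ) π := fun ψ => (hprod ψ).integral_prod_left
  have hTbound : ∀ ψ : Lp ℝ 1 π,
      ∫⁻ x, (‖g ψ x‖₊ : ENNReal) ∂π ≤ M * ENNReal.ofReal ‖ψ‖ := by
    intro ψ
    calc ∫⁻ x, (‖g ψ x‖₊ : ENNReal) ∂π
        ≤ ∫⁻ x, ∫⁻ y, (‖K x y * ψ y‖₊ : ENNReal) ∂π ∂π :=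
          lintegral_mono fun x => enorm_integral_le_lintegral_enorm _
      _ = ∫⁻ y, ∫⁻ x, (‖K x y * ψ y‖₊ : ENNReal) ∂π ∂π :=
          lintegral_lintegral_swap (hprodm ψ).enorm
      _ ≤ M * ENNReal.ofReal ‖ψ‖ := hTon ψ
  -- linear map
  let Tlin : Lp ℝ 1 π →ₗ[ℝ] Lp ℝ 1 π :=
    { toFun := fun ψ => Integrable.toL1 (g ψ) (hgint ψ)
      map_add' := by
        intro ψ φ
        rw [← Integrable.toL1_add _ _ (hgint ψ) (hgint φ)]
        apply (Integrable.toL1_eq_toL1_iff _ _ _ _).2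
        have hc : ⇑(ψ + φ) =ᵐ[π] ⇑ψ + ⇑φ := Lp.coeFn_add ψ φ
        filter_upwards [(hprod ψ).prod_right_ae, (hprod φ).prod_right_ae] with x h1 h2
        have step1 : g (ψ + φ) x = ∫ y, (K x y * ψ y + K x y * φ y) ∂π := by
          show (∫ y, K x y * (ψ + φ) y ∂π) = _
          refine integral_congr_ae (hc.mono fun y hy => ?_)
          simp only [hy, Pi.add_apply]
          ring
        rw [step1, integral_add h1 h2]
        rfl
        all_goals try exact hgint _
      map_smul' := by
        intro c ψ
        rw [RingHom.id_apply, ← Integrable.toL1_smul]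
        apply (Integrable.toL1_eq_toL1_iff _ _ _ _).2
        have hc : ⇑(c • ψ) =ᵐ[π] c • ⇑ψ := Lp.coeFn_smul c ψ
        refine Filter.Eventually.of_forall fun x => ?_
        have step1 : g (c • ψ) x = ∫ y, c * (K x y * ψ y) ∂π := by
          show (∫ y, K x y * (c • ψ) y ∂π) = _
          refine integral_congr_ae (hc.mono fun y hy => ?_)
          simp only [hy, Pi.smul_apply, smul_eq_mul]
          ring
        rw [step1, integral_const_mul]
        show c * (∫ y, K x y * ψ y ∂π) = c • ∫ y, K x y * ψ y ∂π
        rw [smul_eq_mul]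
        all_goals try exact hgint _ }
  -- continuity
  have hTlin_apply : ∀ ψ, Tlin ψ = Integrable.toL1 (g ψ) (hgint ψ) := fun _ => rfl
  have hbound : ∀ ψ : Lp ℝ 1 π, ‖Tlin ψ‖ ≤ Mr * ‖ψ‖ := by
    intro ψ
    rw [hTlin_apply, Integrable.norm_toL1_eq_lintegral_norm]
    have heq : ∫⁻ x, ENNReal.ofReal ‖g ψ x‖ ∂π = ∫⁻ x, (‖g ψ x‖₊ : ENNReal) ∂π :=
      lintegral_congr fun x => ofReal_norm _
    rw [heq]
    refine ENNReal.toReal_le_of_le_ofReal (by positivity) ?_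
    calc ∫⁻ x, (‖g ψ x‖₊ : ENNReal) ∂π ≤ M * ENNReal.ofReal ‖ψ‖ := hTbound ψ
      _ = ENNReal.ofReal (Mr * ‖ψ‖) := by
          rw [hM', ← ENNReal.ofReal_mul hMr0.le]
  let T : Lp ℝ 1 π →L[ℝ] Lp ℝ 1 π := Tlin.mkContinuous Mr hbound
  have hT_apply : ∀ ψ, T ψ = Integrable.toL1 (g ψ) (hgint ψ) := fun _ => rfl
  have hTrep : ∀ ψ : Lp ℝ 1 π, ⇑(T ψ) =ᵐ[π] g ψ := by
    intro ψ
    rw [hT_apply]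
    exact Integrable.coeFn_toL1 (hgint ψ)
  refine ⟨T, ?_, ?_⟩
  · intro ψ
    filter_upwards [hTrep ψ] with x hx
    rw [hx, hg']
  · -- weak compactness via total boundedness
    have hTB : TotallyBounded (⇑T '' Metric.closedBall 0 1) := by
      rw [Metric.totallyBounded_iff]
      intro ε hε
      have hε8 : 0 < ε/8 := by linarith
      obtain ⟨δ, hδ0, hUC⟩ := uc_bound π C' t β ρ hC'0 hβpos hρ0 F hFρ hFae hsb (ε/8) hε8
      obtain ⟨s, hs⟩ := hFcompact.elim_finite_subcover
        (fun y : F => Metric.ball (y : EuclideanSpace ℝ (Fin d)) δ)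
        (fun _ => Metric.isOpen_ball)
        (fun y hy => Set.mem_iUnion.2 ⟨⟨y, hy⟩, Metric.mem_ball_self hδ0⟩)
      set l := s.toList with hl'
      set m := l.length with hm'
      set e : Fin m → EuclideanSpace ℝ (Fin d) := fun i => (l.get i : EuclideanSpace ℝ (Fin d))
        with he'
      have heF : ∀ i, e i ∈ F := fun i => (l.get i).2
      have hcov : ∀ y ∈ F, ∃ i : Fin m, y ∈ Metric.ball (e i) δ := by
        intro y hy
        obtain ⟨i, hi, hmem⟩ := Set.mem_iUnion₂.1 (hs hy)
        obtain ⟨j, hj⟩ := List.mem_iff_get.1 (Finset.mem_toList.2 hi)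
        refine ⟨j, ?_⟩
        have : e j = (i : EuclideanSpace ℝ (Fin d)) := by rw [he']; simp only; rw [hj]
        rwa [this]
      set A : Fin m → Set (EuclideanSpace ℝ (Fin d)) := fun i =>
        (F ∩ Metric.ball (e i) δ) \ ⋃ j : Fin m, ⋃ (_ : j < i), Metric.ball (e j) δ with hA'
      have hAm : ∀ i, MeasurableSet (A i) := fun i =>
        ((hFm.inter Metric.isOpen_ball.measurableSet).diff
          (MeasurableSet.iUnion fun j => MeasurableSet.iUnion fun _ =>
            Metric.isOpen_ball.measurableSet))
      have hAsub : ∀ i, ∀ y ∈ A i, y ∈ Metric.ball (e i) δ := fun i y hy => hy.1.2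
      have huniq : ∀ y ∈ F, ∃ i : Fin m, y ∈ A i ∧ ∀ j, y ∈ A j → j = i := by
        intro y hy
        have hne : (Finset.filter (fun i : Fin m => y ∈ Metric.ball (e i) δ)
            Finset.univ).Nonempty := by
          obtain ⟨i, hi⟩ := hcov y hy
          exact ⟨i, Finset.mem_filter.2 ⟨Finset.mem_univ _, hi⟩⟩
        set i₀ : Fin m := (Finset.filter (fun i : Fin m => y ∈ Metric.ball (e i) δ)
          Finset.univ).min' hne with hi₀'
        have hmem0 : i₀ ∈ Finset.filter (fun i : Fin m => y ∈ Metric.ball (e i) δ)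
            Finset.univ := Finset.min'_mem _ hne
        have hmem : y ∈ Metric.ball (e i₀) δ := (Finset.mem_filter.1 hmem0).2
        have hmin : ∀ j, y ∈ Metric.ball (e j) δ → i₀ ≤ j := fun j hj =>
          Finset.min'_le _ j (Finset.mem_filter.2 ⟨Finset.mem_univ j, hj⟩)
        refine ⟨i₀, ⟨⟨hy, hmem⟩, ?_⟩, ?_⟩
        · intro hmem'
          simp only [Set.mem_iUnion] at hmem'
          obtain ⟨j, hji, hj⟩ := hmem'
          exact absurd (hmin j hj) (not_le.2 hji)
        · intro j hj
          have h1 : i₀ ≤ j := hmin j hj.1.2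
          rcases eq_or_lt_of_le h1 with h | h
          · exact h.symm
          · exact absurd (Set.mem_iUnion.2 ⟨i₀, Set.mem_iUnion.2 ⟨h, hmem⟩⟩) hj.2
      have hΦint : ∀ i : Fin m, Integrable (fun x => K x (e i)) π := by
        intro i
        refine ⟨(hkm1 (e i)).aestronglyMeasurable, ?_⟩
        rw [hasFiniteIntegral_def]
        have heq : ∫⁻ x, (‖K x (e i)‖₊ : ENNReal) ∂π = ∫⁻ x, ENNReal.ofReal (K (e i) x) ∂π :=
          lintegral_congr fun x => by rw [← enorm_eq_nnnorm, Real.enorm_eq_ofReal (hknn _ _), hksymm]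
        refine lt_of_le_of_lt heq.le ?_
        exact lt_of_le_of_lt (hMz (e i) (hFρ (heF i))) hMtop.lt_top
      set Φ : Fin m → Lp ℝ 1 π := fun i => Integrable.toL1 _ (hΦint i) with hΦ'
      have hΦrep : ∀ i, ⇑(Φ i) =ᵐ[π] fun x => K x (e i) := fun i => Integrable.coeFn_toL1 _
      set G : (Fin m → ℝ) → Lp ℝ 1 π := fun c => ∑ i, c i • Φ i with hG'
      have hGcont : Continuous G :=
        continuous_finset_sum _ fun i _ => (continuous_apply i).smul continuous_const
      have hD : IsCompact (G '' Set.pi Set.univ fun _ : Fin m => Set.Icc (-1:ℝ) 1) :=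
        ((isCompact_univ_pi fun _ => isCompact_Icc).image hGcont)
      obtain ⟨N, hNfin, hNcov⟩ := Metric.totallyBounded_iff.1 hD.totallyBounded (ε/2) (by linarith)
      refine ⟨N, hNfin, ?_⟩
      rintro z hz
      obtain ⟨ψ, hψ, rfl⟩ := hz
      have hψ1 : ‖ψ‖ ≤ 1 := mem_closedBall_zero_iff.1 hψ
      have hψint : Integrable (⇑ψ) π := L1.integrable_coeFn ψ
      set c : Fin m → ℝ := fun i => ∫ y in A i, ψ y ∂π with hc'
      have hccube : c ∈ Set.pi Set.univ (fun _ : Fin m => Set.Icc (-1:ℝ) 1) := by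
        intro i _
        rw [Set.mem_Icc, ← abs_le]
        calc |∫ y in A i, ψ y ∂π| ≤ ∫ y in A i, ‖ψ y‖ ∂π := by
              rw [← Real.norm_eq_abs]
              exact norm_integral_le_integral_norm _
          _ ≤ ∫ y, ‖ψ y‖ ∂π := setIntegral_le_integral hψint.norm
              (Filter.Eventually.of_forall fun y => norm_nonneg _)
          _ = ‖ψ‖ := (L1.norm_eq_integral_norm ψ).symm
          _ ≤ 1 := hψ1
      set Kp : EuclideanSpace ℝ (Fin d) → EuclideanSpace ℝ (Fin d) → ℝ :=
        fun x y => ∑ i, (A i).indicator (fun _ => K x (e i)) y with hKp'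
      have hmulrw : ∀ x, (fun y => Kp x y * ψ y)
          = fun y => ∑ i, (A i).indicator (fun y' => K x (e i) * ψ y') y := by
        intro x; funext y
        rw [hKp']; simp only
        rw [Finset.sum_mul]
        refine Finset.sum_congr rfl fun i _ => ?_
        by_cases hy : y ∈ A i <;> simp [hy]
      have hKpint : ∀ x, Integrable (fun y => Kp x y * ψ y) π := by
        intro x
        rw [hmulrw x]
        exact integrable_finset_sum _ fun i _ => (hψint.const_mul _).indicator (hAm i)
      have hKpcalc : ∀ x, ∫ y, Kp x y * ψ y ∂π = ∑ i, c i * K x (e i) := by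
        intro x
        rw [hmulrw x]
        rw [integral_finset_sum _ fun i _ => (hψint.const_mul _).indicator (hAm i)]
        refine Finset.sum_congr rfl fun i _ => ?_
        rw [integral_indicator (hAm i), integral_const_mul, mul_comm]
      have hKpm : Measurable (fun p : EuclideanSpace ℝ (Fin d) × EuclideanSpace ℝ (Fin d) =>
          Kp p.1 p.2) := by
        rw [hKp']
        refine Finset.measurable_sum _ fun i _ => ?_
        have heq : (fun p : EuclideanSpace ℝ (Fin d) × EuclideanSpace ℝ (Fin d) =>
            (A i).indicator (fun _ => K p.1 (e i)) p.2)
            = fun p => K p.1 (e i) * (A i).indicator (fun _ => (1:ℝ)) p.2 :=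
          funext fun p => by by_cases h : p.2 ∈ A i <;> simp [h]
        exact heq ▸ ((hkm1 (e i)).comp measurable_fst).mul
          ((measurable_const.indicator (hAm i)).comp measurable_snd)
      have hGrep : ⇑(G c) =ᵐ[π] fun x => ∑ i, c i * K x (e i) := by
        have hi : ∀ᵐ x ∂π, ∀ i : Fin m, (c i • Φ i) x = c i * K x (e i) := by
          rw [MeasureTheory.ae_all_iff]
          intro i
          filter_upwards [Lp.coeFn_smul (c i) (Φ i), hΦrep i] with x h1 h2
          rw [h1, Pi.smul_apply, h2, smul_eq_mul]
        filter_upwards [Lp_coeFn_finsetSum π Finset.univ (fun i => c i • Φ i), hi] with x h1 h2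
        calc (G c) x = ∑ i, (c i • Φ i) x := h1
          _ = ∑ i, c i * K x (e i) := Finset.sum_congr rfl fun i _ => h2 i
      have hsubrep : ⇑(T ψ - G c) =ᵐ[π] fun x => ∫ y, (K x y - Kp x y) * ψ y ∂π := by
        filter_upwards [Lp.coeFn_sub (T ψ) (G c), hTrep ψ, hGrep,
          (hprod ψ).prod_right_ae] with x h1 h2 h3 h4
        rw [h1, Pi.sub_apply, h2, h3, ← hKpcalc x]
        have : (fun y => (K x y - Kp x y) * ψ y)
            = fun y => K x y * ψ y - Kp x y * ψ y := funext fun y => by ring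
        rw [this, integral_sub h4 (hKpint x)]
      have hw : ∀ᵐ y ∂π, ∫⁻ x, (‖K x y - Kp x y‖₊ : ENNReal) ∂π ≤ ENNReal.ofReal (ε/8) := by
        filter_upwards [hFae] with y hy
        obtain ⟨i, hyA, huniq'⟩ := huniq y hy
        have hcol : ∀ x, Kp x y = K x (e i) := by
          intro x
          rw [hKp']; simp only
          rw [Finset.sum_eq_single i]
          · exact Set.indicator_of_mem hyA _
          · intro j _ hj
            exact Set.indicator_of_notMem (fun hyj => hj (huniq' j hyj)) _
          · intro h; exact absurd (Finset.mem_univ i) h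
        have heq2 : ∫⁻ x, (‖K x y - Kp x y‖₊ : ENNReal) ∂π
            = ∫⁻ x, ENNReal.ofReal |‖x - y‖ ^ t - ‖x - e i‖ ^ t| ∂π := by
          refine lintegral_congr fun x => ?_
          rw [hcol x, ← enorm_eq_nnnorm, ← ofReal_norm, Real.norm_eq_abs]
        rw [heq2]
        exact hUC y hy (e i) (heF i) (le_of_lt (Metric.mem_ball.1 (hAsub i y hyA)))
      have hL1 : ∫⁻ x, (‖(⇑(T ψ - G c)) x‖₊ : ENNReal) ∂π ≤ ENNReal.ofReal (ε/8) := by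
        have haem : AEMeasurable (fun p : EuclideanSpace ℝ (Fin d) × EuclideanSpace ℝ (Fin d) =>
            ((‖(K p.1 p.2 - Kp p.1 p.2) * ψ p.2‖₊ : ENNReal))) (π.prod π) :=
          ((hkm.sub hKpm).aestronglyMeasurable.mul (Lp.aestronglyMeasurable ψ).comp_snd).enorm
        calc ∫⁻ x, (‖(⇑(T ψ - G c)) x‖₊ : ENNReal) ∂π
            = ∫⁻ x, (‖∫ y, (K x y - Kp x y) * ψ y ∂π‖₊ : ENNReal) ∂π :=
              lintegral_congr_ae (hsubrep.mono fun x hx => by simp only [hx])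
          _ ≤ ∫⁻ x, ∫⁻ y, (‖(K x y - Kp x y) * ψ y‖₊ : ENNReal) ∂π ∂π :=
              lintegral_mono fun x => enorm_integral_le_lintegral_enorm _
          _ = ∫⁻ y, ∫⁻ x, (‖(K x y - Kp x y) * ψ y‖₊ : ENNReal) ∂π ∂π :=
              lintegral_lintegral_swap haem
          _ = ∫⁻ y, (∫⁻ x, (‖K x y - Kp x y‖₊ : ENNReal) ∂π) * (‖ψ y‖₊ : ENNReal) ∂π := by
              refine lintegral_congr fun y => ?_
              simp_rw [nnnorm_mul, ENNReal.coe_mul]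
              exact lintegral_mul_const' _ _ ENNReal.coe_ne_top
          _ ≤ ∫⁻ y, ENNReal.ofReal (ε/8) * (‖ψ y‖₊ : ENNReal) ∂π := by
              refine lintegral_mono_ae ?_
              filter_upwards [hw] with y hy
              exact mul_le_mul_left hy _
          _ = ENNReal.ofReal (ε/8) * ENNReal.ofReal ‖ψ‖ := by
              rw [lintegral_const_mul' _ _ ENNReal.ofReal_ne_top, hψnorm]
          _ ≤ ENNReal.ofReal (ε/8) * 1 := by
              gcongr
              exact ENNReal.ofReal_le_one.2 hψ1
          _ = ENNReal.ofReal (ε/8) := mul_one _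
      have hdiff : ‖T ψ - G c‖ ≤ ε/8 := by
        rw [Lp.norm_def, eLpNorm_one_eq_lintegral_enorm]
        exact ENNReal.toReal_le_of_le_ofReal (by linarith) hL1
      obtain ⟨z, hzN, hzball⟩ := Set.mem_iUnion₂.1 (hNcov ⟨c, hccube, rfl⟩)
      refine Set.mem_iUnion₂.2 ⟨z, hzN, ?_⟩
      rw [Metric.mem_ball] at hzball ⊢
      have h1 : dist (T ψ) (G c) ≤ ε/8 := by rw [dist_eq_norm]; exact hdiff
      calc dist (T ψ) z ≤ dist (T ψ) (G c) + dist (G c) z := dist_triangle _ _ _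
        _ < ε/8 + ε/2 := by linarith
        _ < ε := by linarith

    have hclosed : IsCompact (closure (⇑T '' Metric.closedBall 0 1)) :=
      TotallyBounded.isCompact_of_isClosed hTB.closure isClosed_closure
    refine ⟨(toWeakSpaceCLM ℝ (Lp ℝ 1 π)) '' closure (⇑T '' Metric.closedBall 0 1),
      hclosed.image (toWeakSpaceCLM ℝ (Lp ℝ 1 π)).continuous, ?_⟩
    intro z hz
    exact ⟨z, subset_closure hz, rfl⟩
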